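/- There exists a constant c > 0 such that for all ξ, η ∈ ℝ³ with 0 < |η| ≤ |ξ|/2, one has |Φ₁(ξ,η)| ≥ c·|η|·( θ² + |ξ|² / ((1+|η|²)(1+|ξ|²)) ), where θ ∈ [0,π] is the angle between ξ and η, i.e., cos θ = ⟨ξ,η⟩/(|ξ||η|). -/

import Mathlib

noncomputable def q (r : ℝ) : ℝ := Real.sqrt ((2 + r ^ 2) / (1 + r ^ 2))
noncomputable def p (r : ℝ) : ℝ := r * q r
noncomputable def Φ₁ (ξ η : EuclideanSpace ℝ (Fin 3)) : ℝ :=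
  p ‖ξ‖ - p ‖ξ - η‖ - p ‖η‖

lemma one_add_sq_pos (r : ℝ) : (0:ℝ) < 1 + r ^ 2 := by positivity

lemma q_sq (r : ℝ) : q r ^ 2 = (2 + r ^ 2) / (1 + r ^ 2) :=
  Real.sq_sqrt (by positivity)

lemma one_le_q (r : ℝ) : 1 ≤ q r := by
  have h : (1:ℝ) ≤ (2 + r ^ 2) / (1 + r ^ 2) := by
    rw [le_div_iff₀ (one_add_sq_pos r)]; nlinarith [sq_nonneg r]
  calc (1:ℝ) = Real.sqrt 1 := Real.sqrt_one.symm
    _ ≤ q r := Real.sqrt_le_sqrt h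

lemma q_le_sqrt2 (r : ℝ) : q r ≤ Real.sqrt 2 := by
  apply Real.sqrt_le_sqrt
  rw [div_le_iff₀ (one_add_sq_pos r)]
  nlinarith [sq_nonneg r]

lemma q_anti {x y : ℝ} (h : x ≤ y) (hx : 0 ≤ x) : q y ≤ q x := by
  apply Real.sqrt_le_sqrt
  rw [div_le_div_iff₀ (one_add_sq_pos y) (one_add_sq_pos x)]
  nlinarith

lemma q_nonneg (r : ℝ) : 0 ≤ q r := Real.sqrt_nonneg _

lemma sqrt2_lt_two : Real.sqrt 2 < 2 := by
  nlinarith [Real.sq_sqrt (by norm_num : (0:ℝ) ≤ 2), Real.sqrt_nonneg 2]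

lemma sqrt2_pos : (0:ℝ) < Real.sqrt 2 := Real.sqrt_pos.mpr (by norm_num)

lemma le_p {r : ℝ} (hr : 0 ≤ r) : r ≤ p r := by
  have := one_le_q r; rw [p]; nlinarith

lemma p_le {r : ℝ} (hr : 0 ≤ r) : p r ≤ Real.sqrt 2 * r := by
  have := q_le_sqrt2 r; rw [p]; nlinarith

lemma p_nonneg {r : ℝ} (hr : 0 ≤ r) : 0 ≤ p r := mul_nonneg hr (q_nonneg r)

lemma p_sq_diff (x y : ℝ) :
    p x ^ 2 - p y ^ 2 = (x ^ 2 - y ^ 2) * (1 + 1 / ((1 + x ^ 2) * (1 + y ^ 2))) := by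
  rw [p, p, mul_pow, mul_pow, q_sq, q_sq]
  have hx := (one_add_sq_pos x).ne'
  have hy := (one_add_sq_pos y).ne'
  field_simp
  ring

/-- Lower Lipschitz bound. -/
lemma p_diff {x y : ℝ} (hy : 0 ≤ y) (hxy : y ≤ x) : (x - y) / Real.sqrt 2 ≤ p x - p y := by
  rcases eq_or_lt_of_le hxy with rfl | h
  · simp
  have hx : 0 < x := lt_of_le_of_lt hy h
  have hpx : x ≤ p x := le_p hx.le
  have hpy : 0 ≤ p y := p_nonneg hy
  have hpy' : y ≤ p y := le_p hy
  have hsum : 0 < p x + p y := by linarith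
  have hsq := p_sq_diff x y
  have hfac : (0:ℝ) ≤ 1 / ((1 + x ^ 2) * (1 + y ^ 2)) := by positivity
  have hxy2 : (0:ℝ) ≤ x ^ 2 - y ^ 2 := by nlinarith
  have h2 : x ^ 2 - y ^ 2 ≤ p x ^ 2 - p y ^ 2 := by
    rw [hsq]; nlinarith [mul_nonneg hxy2 hfac]
  have hsum2 : p x + p y ≤ Real.sqrt 2 * (x + y) := by
    have h1 := p_le hx.le; have h2 := p_le hy; linarith
  rw [div_le_iff₀ sqrt2_pos]
  have key : (x - y) * (p x + p y) ≤ ((p x - p y) * Real.sqrt 2) * (p x + p y) := by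
    have h3 : (x - y) * (p x + p y) ≤ (x - y) * (Real.sqrt 2 * (x + y)) :=
      mul_le_mul_of_nonneg_left hsum2 (by linarith)
    have h5 : Real.sqrt 2 * (x ^ 2 - y ^ 2) ≤ Real.sqrt 2 * (p x ^ 2 - p y ^ 2) :=
      mul_le_mul_of_nonneg_left h2 sqrt2_pos.le
    calc (x - y) * (p x + p y) ≤ (x - y) * (Real.sqrt 2 * (x + y)) := h3
      _ = Real.sqrt 2 * (x ^ 2 - y ^ 2) := by ring
      _ ≤ Real.sqrt 2 * (p x ^ 2 - p y ^ 2) := h5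
      _ = ((p x - p y) * Real.sqrt 2) * (p x + p y) := by ring
  exact le_of_mul_le_mul_right key hsum

set_option maxHeartbeats 1000000 in
/-- Superadditivity defect lower bound. -/
lemma p_superadd {t b : ℝ} (hb : 0 < b) (hbt : b ≤ t) :
    1 / (12 * Real.sqrt 2) * (b * ((t + b) ^ 2 / ((1 + (t + b) ^ 2) * (1 + b ^ 2)))) ≤
      p t + p b - p (t + b) := by
  set a := t + b with ha_def
  have ht : 0 < t := lt_of_lt_of_le hb hbt
  have ha : 0 < a := by positivity
  have hta : t ≤ a := by rw [ha_def]; linarith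
  have hba : b ≤ a := by rw [ha_def]; linarith
  have h2b : 2 * b ≤ a := by rw [ha_def]; linarith
  have h2t : a ≤ 2 * t := by rw [ha_def]; linarith
  clear_value a
  set α := 1 / (1 + a ^ 2) with hα_def
  set β := 1 / (1 + b ^ 2) with hβ_def
  have hαpos : 0 < α := by positivity
  have hβpos : 0 < β := by positivity
  have hα1 : α ≤ 1 := by rw [hα_def, div_le_one (one_add_sq_pos a)]; nlinarith
  have hβ1 : β ≤ 1 := by rw [hβ_def, div_le_one (one_add_sq_pos b)]; nlinarith
  have hqa2 : q a ^ 2 = 1 + α := by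
    rw [q_sq, hα_def]; field_simp; ring
  have hqb2 : q b ^ 2 = 1 + β := by
    rw [q_sq, hβ_def]; field_simp; ring
  have hqat : q a ≤ q t := q_anti hta ht.le
  have hqab : q a ≤ q b := q_anti hba hb.le
  have hqa1 : 1 ≤ q a := one_le_q a
  have hqb1 : 1 ≤ q b := one_le_q b
  have hqt1 : 1 ≤ q t := one_le_q t
  have hqas : q a ≤ Real.sqrt 2 := q_le_sqrt2 a
  have hqbs : q b ≤ Real.sqrt 2 := q_le_sqrt2 b
  have hs2 : Real.sqrt 2 ≤ 2 := sqrt2_lt_two.le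
  have hαβ : α * β = 1 / ((1 + a ^ 2) * (1 + b ^ 2)) := by
    rw [hα_def, hβ_def, div_mul_div_comm, one_mul]
  clear_value α β
  have hD2 : (q a * q b) ^ 2 = (1 + α) * (1 + β) := by rw [mul_pow, hqa2, hqb2]
  have hαβpos : 0 < α * β := mul_pos hαpos hβpos
  have hαβ1 : α * β ≤ 1 := by nlinarith
  have hD2' : q a * q b ≤ 2 := by
    have m1 : q a * q b ≤ Real.sqrt 2 * q b := mul_le_mul_of_nonneg_right hqas (q_nonneg b)
    have m2 : Real.sqrt 2 * q b ≤ Real.sqrt 2 * Real.sqrt 2 :=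
      mul_le_mul_of_nonneg_left hqbs sqrt2_pos.le
    have m3 : Real.sqrt 2 * Real.sqrt 2 = 2 := Real.mul_self_sqrt (by norm_num)
    linarith
  have hDle : q a * q b ≤ 4 - (1 + α * β) := by linarith
  have hDnn : 1 ≤ q a * q b := by nlinarith
  have hkey0 : (1 + α * β) ^ 2 + β * (1 - α) ≤ (q a * q b) ^ 2 := by
    rw [hD2]
    have hc1 : α * β ^ 2 ≤ 1 := by nlinarith
    nlinarith [mul_nonneg hαpos.le (sub_nonneg.mpr hc1)]
  have hDge : 1 + α * β ≤ q a * q b := by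
    nlinarith [mul_nonneg hβpos.le (sub_nonneg.mpr hα1)]
  have hterm2 : β * (1 - α) / 4 ≤ q a * q b - (1 + α * β) := by
    have e : (q a * q b - (1 + α * β)) * (q a * q b + (1 + α * β)) =
        (q a * q b) ^ 2 - (1 + α * β) ^ 2 := by ring
    have e2 : (q a * q b - (1 + α * β)) * (q a * q b + (1 + α * β)) ≤
        (q a * q b - (1 + α * β)) * 4 :=
      mul_le_mul_of_nonneg_left (by linarith) (by linarith)
    linarith
  have hone : 1 - α = a ^ 2 * α := by
    rw [hα_def]; field_simp; ring
  -- K lower bound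
  have hK : 1 / 4 * (b * (a ^ 2 * (α * β))) ≤
      a * (q t * q a - 1 - α * β) + b * (q t * q b - 1 - α * β) := by
    have h1' : a * (α * (1 - β)) ≤ a * (q t * q a - 1 - α * β) := by
      apply mul_le_mul_of_nonneg_left _ ha.le
      have hx : q a * q a ≤ q t * q a := mul_le_mul_of_nonneg_right hqat (q_nonneg a)
      have hy : q a * q a = 1 + α := by rw [← hqa2]; ring
      nlinarith
    have h2' : b * (β * (1 - α) / 4) ≤ b * (q t * q b - 1 - α * β) := by
      apply mul_le_mul_of_nonneg_left _ hb.le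
      have hx : q a * q b ≤ q t * q b := mul_le_mul_of_nonneg_right hqat (q_nonneg b)
      linarith
    have hnn : 0 ≤ a * (α * (1 - β)) :=
      mul_nonneg ha.le (mul_nonneg hαpos.le (by linarith))
    have he : b * (β * (1 - α) / 4) = 1 / 4 * (b * (a ^ 2 * (α * β))) := by
      rw [hone]; ring
    have h2'' : 1 / 4 * (b * (a ^ 2 * (α * β))) ≤ b * (q t * q b - 1 - α * β) := by
      rw [← he]; exact h2'
    linarith
  -- the identity
  have hd : p a ^ 2 - p b ^ 2 = (a ^ 2 - b ^ 2) * (1 + α * β) := by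
    rw [p_sq_diff, hαβ]
  have hab2 : a ^ 2 - b ^ 2 = t * (a + b) := by rw [ha_def]; ring
  have hid : (p t + p b - p a) * (p a + p b) =
      t * (a * (q t * q a - 1 - α * β) + b * (q t * q b - 1 - α * β)) := by
    have e1 : (p t + p b - p a) * (p a + p b) = p t * (p a + p b) - (p a ^ 2 - p b ^ 2) := by
      ring
    rw [e1, hd, hab2, p, p, p]
    ring
  -- assemble
  have hpa : p a ≤ Real.sqrt 2 * a := p_le ha.le
  have hpb : p b ≤ Real.sqrt 2 * b := p_le hb.le
  have hpapb : 0 < p a + p b := by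
    have u1 := le_p ha.le; have u2 := p_nonneg hb.le; linarith
  have hub : p a + p b ≤ Real.sqrt 2 * (3 / 2 * a) := by
    have : Real.sqrt 2 * b ≤ Real.sqrt 2 * (a / 2) :=
      mul_le_mul_of_nonneg_left (by linarith) sqrt2_pos.le
    linarith
  set L := 1 / (12 * Real.sqrt 2) * (b * (a ^ 2 / ((1 + a ^ 2) * (1 + b ^ 2)))) with hL_def
  have hLpos : 0 ≤ L := by positivity
  have hX2 : a ^ 2 / ((1 + a ^ 2) * (1 + b ^ 2)) = a ^ 2 * (α * β) := by
    rw [hαβ, mul_one_div]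
  have hL2 : L * (Real.sqrt 2 * (3 / 2 * a)) = 1 / 8 * (a ^ 3 * (b * (α * β))) := by
    rw [hL_def, hX2]
    have hs : Real.sqrt 2 * Real.sqrt 2 = 2 := Real.mul_self_sqrt (by norm_num)
    have hne : Real.sqrt 2 ≠ 0 := sqrt2_pos.ne'
    field_simp
    ring_nf
  have htK : 1 / 8 * (a ^ 3 * (b * (α * β))) ≤
      t * (a * (q t * q a - 1 - α * β) + b * (q t * q b - 1 - α * β)) := by
    have hKnn : 0 ≤ 1 / 4 * (b * (a ^ 2 * (α * β))) := by positivity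
    have h3 : (a / 2) * (1 / 4 * (b * (a ^ 2 * (α * β)))) ≤
        t * (a * (q t * q a - 1 - α * β) + b * (q t * q b - 1 - α * β)) := by
      apply le_trans (mul_le_mul (by linarith) hK hKnn ht.le) (le_of_eq rfl)
    calc 1 / 8 * (a ^ 3 * (b * (α * β))) = (a / 2) * (1 / 4 * (b * (a ^ 2 * (α * β)))) := by ring
      _ ≤ _ := h3
  have key : L * (p a + p b) ≤ (p t + p b - p a) * (p a + p b) := by
    calc L * (p a + p b) ≤ L * (Real.sqrt 2 * (3 / 2 * a)) :=
          mul_le_mul_of_nonneg_left hub hLpos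
      _ = 1 / 8 * (a ^ 3 * (b * (α * β))) := hL2
      _ ≤ t * (a * (q t * q a - 1 - α * β) + b * (q t * q b - 1 - α * β)) := htK
      _ = (p t + p b - p a) * (p a + p b) := hid.symm
  exact le_of_mul_le_mul_right key hpapb

set_option maxHeartbeats 1000000 in
theorem stmt12 :
    ∃ c : ℝ, 0 < c ∧
      ∀ ξ η : EuclideanSpace ℝ (Fin 3), 0 < ‖η‖ → ‖η‖ ≤ ‖ξ‖ / 2 →
        c * (‖η‖ * (InnerProductGeometry.angle ξ η ^ 2 +
            ‖ξ‖ ^ 2 / ((1 + ‖η‖ ^ 2) * (1 + ‖ξ‖ ^ 2)))) ≤ |Φ₁ ξ η| := by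
  refine ⟨1 / 100, by norm_num, fun ξ η hb hba => ?_⟩
  set b := ‖η‖ with hb_def
  set a := ‖ξ‖ with ha_def
  set s := ‖ξ - η‖ with hs_def
  set θ := InnerProductGeometry.angle ξ η with hθ_def
  have ha : 0 < a := by linarith
  have hs0 : 0 ≤ s := norm_nonneg _
  have htle : a - b ≤ s := by
    rw [hs_def, ha_def, hb_def]; exact norm_sub_norm_le ξ η
  have hsle : s ≤ a + b := by
    rw [hs_def, ha_def, hb_def]; exact norm_sub_le ξ η
  have hinner : (inner ℝ ξ η : ℝ) = Real.cos θ * (a * b) :=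
    (InnerProductGeometry.cos_angle_mul_norm_mul_norm ξ η).symm
  have hssq : s ^ 2 = a ^ 2 - 2 * (Real.cos θ * (a * b)) + b ^ 2 := by
    rw [hs_def, ha_def, hb_def, ← hinner]
    exact norm_sub_sq_real ξ η
  have hθ0 : 0 ≤ θ := InnerProductGeometry.angle_nonneg ξ η
  have hθπ : θ ≤ Real.pi := InnerProductGeometry.angle_le_pi ξ η
  have hcos : Real.cos θ ≤ 1 - 2 / Real.pi ^ 2 * θ ^ 2 :=
    Real.cos_le_one_sub_mul_cos_sq (abs_le.mpr ⟨by linarith [Real.pi_pos], hθπ⟩)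
  have hπ : Real.pi ≤ 4 := by linarith [Real.pi_le_four]
  have hπpos : 0 < Real.pi := Real.pi_pos
  clear_value b a s θ
  -- piece A : p s - p (a-b)
  have hA1 : (s - (a - b)) / Real.sqrt 2 ≤ p s - p (a - b) :=
    p_diff (by linarith) htle
  have hstpos : 0 < s + (a - b) := by nlinarith
  have hdiff : (s - (a - b)) * (s + (a - b)) = 2 * a * b * (1 - Real.cos θ) := by
    nlinarith [hssq]
  have hcosθ2 : 2 / Real.pi ^ 2 * θ ^ 2 ≤ 1 - Real.cos θ := by linarith
  have hsub : 2 * a * b * (2 / Real.pi ^ 2 * θ ^ 2) ≤ (s - (a - b)) * (s + (a - b)) := by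
    rw [hdiff]
    apply mul_le_mul_of_nonneg_left hcosθ2
    positivity
  have hstub : s + (a - b) ≤ 5 / 2 * a := by linarith
  have hAkey : 8 / (5 * Real.pi ^ 2) * (b * θ ^ 2) ≤ s - (a - b) := by
    have hge : 0 ≤ s - (a - b) := by linarith
    have h5 : (s - (a - b)) * (s + (a - b)) ≤ (s - (a - b)) * (5 / 2 * a) :=
      mul_le_mul_of_nonneg_left hstub hge
    have h6 : 2 * a * b * (2 / Real.pi ^ 2 * θ ^ 2) ≤ (s - (a - b)) * (5 / 2 * a) := by
      linarith
    have h7 : 8 / (5 * Real.pi ^ 2) * (b * θ ^ 2) * (5 / 2 * a) =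
        2 * a * b * (2 / Real.pi ^ 2 * θ ^ 2) := by
      field_simp
      ring
    have h8 : 0 < 5 / 2 * a := by positivity
    have h9 : 8 / (5 * Real.pi ^ 2) * (b * θ ^ 2) * (5 / 2 * a) ≤ (s - (a - b)) * (5 / 2 * a) := by
      rw [h7]; linarith
    exact le_of_mul_le_mul_right h9 h8
  -- piece B
  have hB : 1 / (12 * Real.sqrt 2) * (b * (a ^ 2 / ((1 + a ^ 2) * (1 + b ^ 2)))) ≤
      p (a - b) + p b - p a := by
    have := p_superadd hb (show b ≤ a - b by linarith)
    have he : a - b + b = a := by ring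
    rw [he] at this
    exact this
  -- |Φ₁| = (p s - p (a-b)) + (p (a-b) + p b - p a)
  have hAnn : 0 ≤ p s - p (a - b) := by
    have h0 : (0:ℝ) ≤ 8 / (5 * Real.pi ^ 2) * (b * θ ^ 2) := by positivity
    have h1 : 0 ≤ s - (a - b) := le_trans h0 hAkey
    have h2 : 0 ≤ (s - (a - b)) / Real.sqrt 2 := div_nonneg h1 sqrt2_pos.le
    linarith [hA1]
  have hBnn : 0 ≤ p (a - b) + p b - p a := by
    refine le_trans ?_ hB
    positivity
  have hΦ : Φ₁ ξ η = -((p s - p (a - b)) + (p (a - b) + p b - p a)) := by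
    simp only [Φ₁]
    rw [← ha_def, ← hs_def, ← hb_def]; ring
  have habs : |Φ₁ ξ η| = (p s - p (a - b)) + (p (a - b) + p b - p a) := by
    rw [hΦ, abs_neg, abs_of_nonneg (by linarith)]
  rw [habs]
  -- numeric constants
  have hs2 : Real.sqrt 2 ≤ 2 := sqrt2_lt_two.le
  have hs2p : 0 < Real.sqrt 2 := sqrt2_pos
  have hbθ : (0:ℝ) ≤ b * θ ^ 2 := by positivity
  have hX : (0:ℝ) ≤ b * (a ^ 2 / ((1 + a ^ 2) * (1 + b ^ 2))) := by positivity
  have hA : 1 / 100 * (b * θ ^ 2) ≤ p s - p (a - b) := by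
    have h1 : (8 / (5 * Real.pi ^ 2) * (b * θ ^ 2)) / Real.sqrt 2 ≤ (s - (a - b)) / Real.sqrt 2 :=
      (div_le_div_iff_of_pos_right hs2p).mpr hAkey
    have h2 : (8 / (5 * Real.pi ^ 2) * (b * θ ^ 2)) / Real.sqrt 2 =
        8 / (5 * Real.pi ^ 2 * Real.sqrt 2) * (b * θ ^ 2) := by
      rw [div_mul_eq_mul_div, div_div]; ring
    have hden : 5 * Real.pi ^ 2 * Real.sqrt 2 ≤ 160 := by nlinarith
    have hdenp : 0 < 5 * Real.pi ^ 2 * Real.sqrt 2 := by positivity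
    have h3 : (1:ℝ) / 100 ≤ 8 / (5 * Real.pi ^ 2 * Real.sqrt 2) := by
      rw [div_le_div_iff₀ (by norm_num) hdenp]
      nlinarith
    have h4 : 1 / 100 * (b * θ ^ 2) ≤ 8 / (5 * Real.pi ^ 2 * Real.sqrt 2) * (b * θ ^ 2) :=
      mul_le_mul_of_nonneg_right h3 hbθ
    calc 1 / 100 * (b * θ ^ 2) ≤ 8 / (5 * Real.pi ^ 2 * Real.sqrt 2) * (b * θ ^ 2) := h4
      _ = (8 / (5 * Real.pi ^ 2) * (b * θ ^ 2)) / Real.sqrt 2 := h2.symm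
      _ ≤ (s - (a - b)) / Real.sqrt 2 := h1
      _ ≤ p s - p (a - b) := hA1
  have hB' : 1 / 100 * (b * (a ^ 2 / ((1 + a ^ 2) * (1 + b ^ 2)))) ≤
      p (a - b) + p b - p a := by
    refine le_trans ?_ hB
    apply mul_le_mul_of_nonneg_right _ hX
    rw [div_le_div_iff₀ (by norm_num) (by positivity)]
    nlinarith
  have hexp : 1 / 100 * (b * (θ ^ 2 + a ^ 2 / ((1 + a ^ 2) * (1 + b ^ 2)))) =
      1 / 100 * (b * θ ^ 2) + 1 / 100 * (b * (a ^ 2 / ((1 + a ^ 2) * (1 + b ^ 2)))) := by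
    ring
  rw [show ((1:ℝ) + b ^ 2) * (1 + a ^ 2) = (1 + a ^ 2) * (1 + b ^ 2) from mul_comm _ _, hexp]
  linarith
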